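/- Let d > 0 and let p(x) be a polynomial of degree d with p(x) = Σ_{j=0}^{d} h*_j · C(x + d − j, d) and h*_0 = 1. Then the coefficient of x in p(x) equals H_d + (1/d) Σ_{j=1}^{d} (−1)^{j−1} h*_j / C(d−1, j−1). -/

import Mathlib

/-- The polynomial binomial coefficient `C(x + d - j, d) = (x+d-j)(x+d-j-1)⋯(x-j+1)/d!`. -/
noncomputable def binomPoly (d j : ℕ) : Polynomial ℚ :=
  ((d.factorial : ℚ)⁻¹) • ∏ i ∈ Finset.range d, (Polynomial.X + Polynomial.C ((d : ℚ) - j - i))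

open Polynomial Finset

lemma coeff0_prod (d : ℕ) (f : ℕ → ℚ) :
    (∏ i ∈ range d, (X + C (f i))).coeff 0 = ∏ i ∈ range d, f i := by
  rw [coeff_zero_eq_eval_zero, eval_prod]; simp

lemma coeff1_prod (d : ℕ) (f : ℕ → ℚ) :
    (∏ i ∈ range d, (X + C (f i))).coeff 1
      = ∑ i ∈ range d, ∏ k ∈ (range d).erase i, f k := by
  induction d with
  | zero => simp [Polynomial.coeff_one]
  | succ d ih =>
    rw [prod_range_succ, mul_add, coeff_add]
    rw [coeff_mul_X, mul_comm _ (C (f d)), coeff_C_mul, coeff0_prod, ih]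
    rw [Finset.sum_range_succ]
    have h1 : (range (d+1)).erase d = range d := by
      ext x; simp [Finset.mem_erase]; omega
    rw [h1]
    have h2 : ∀ i ∈ range d, ∏ k ∈ (range (d+1)).erase i, f k
        = f d * ∏ k ∈ (range d).erase i, f k := by
      intro i hi
      have : (range (d+1)).erase i = insert d ((range d).erase i) := by
        ext x; simp at hi ⊢; omega
      rw [this, Finset.prod_insert (by simp)]
    rw [Finset.sum_congr rfl h2, ← Finset.mul_sum]
    ring

lemma prod_sub_fact (n : ℕ) : ∏ k ∈ range n, ((n:ℚ) - k) = n.factorial := by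
  rw [← Finset.prod_range_reflect]
  have : ∀ k ∈ range n, ((n:ℚ) - (n - 1 - k : ℕ)) = ((k+1 : ℕ) : ℚ) := by
    intro k hk; simp at hk; push_cast [Nat.cast_sub (by omega : k ≤ n - 1), Nat.cast_sub (by omega : 1 ≤ n)]; ring
  rw [Finset.prod_congr rfl this, ← Nat.cast_prod, Finset.prod_range_add_one_eq_factorial]

lemma prod_neg_fact (m : ℕ) : ∏ k ∈ range m, (-(1:ℚ) - k) = (-1)^m * m.factorial := by
  have : ∀ k ∈ range m, (-(1:ℚ) - k) = (-1) * ((k+1 : ℕ) : ℚ) := by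
    intro k hk; push_cast; ring
  rw [Finset.prod_congr rfl this, Finset.prod_mul_distrib, Finset.prod_const,
    ← Nat.cast_prod, Finset.prod_range_add_one_eq_factorial, Finset.card_range]

lemma sum_inv_harmonic (d : ℕ) : ∑ i ∈ range d, ((d:ℚ) - i)⁻¹ = harmonic d := by
  rw [← Finset.sum_range_reflect]
  have : ∀ k ∈ range d, ((d:ℚ) - (d - 1 - k : ℕ))⁻¹ = ((k:ℚ)+1)⁻¹ := by
    intro k hk; simp at hk
    push_cast [Nat.cast_sub (by omega : k ≤ d - 1), Nat.cast_sub (by omega : 1 ≤ d)]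
    ring_nf
  rw [Finset.sum_congr rfl this]
  simp [harmonic, Rat.cast_inv]


lemma coeff1_binomPoly_zero (d : ℕ) : (binomPoly d 0).coeff 1 = harmonic d := by
  rw [binomPoly, Polynomial.coeff_smul]
  simp only [Nat.cast_zero, sub_zero]
  rw [coeff1_prod]
  have key : ∀ i ∈ range d, ∏ k ∈ (range d).erase i, ((d:ℚ) - k)
      = (d.factorial : ℚ) * ((d:ℚ) - i)⁻¹ := by
    intro i hi
    simp at hi
    have hne : ((d:ℚ) - i) ≠ 0 := by
      have : (i:ℚ) < d := by exact_mod_cast hi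
      linarith
    have := Finset.mul_prod_erase (range d) (fun k => ((d:ℚ) - k)) (Finset.mem_range.mpr hi)
    rw [prod_sub_fact] at this
    field_simp
    linear_combination this
  rw [Finset.sum_congr rfl key, ← Finset.mul_sum, sum_inv_harmonic]
  rw [smul_eq_mul, ← mul_assoc, inv_mul_cancel₀ (by positivity), one_mul]

lemma coeff1_binomPoly_pos (d j : ℕ) (hd : 0 < d) (hj1 : 1 ≤ j) (hjd : j ≤ d) :
    (binomPoly d j).coeff 1
      = (-1:ℚ)^(j-1) / (d * ((d-1).choose (j-1) : ℚ)) := by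
  rw [binomPoly, Polynomial.coeff_smul, coeff1_prod, smul_eq_mul]
  set s := d - j with hs
  have hsd : s < d := by omega
  have hcast : ((d:ℚ) - j) = (s:ℚ) := by push_cast [hs, Nat.cast_sub hjd]; ring
  rw [Finset.sum_eq_single s]
  · -- product over (range d).erase s
    have hsplit : (range d).erase s = range s ∪ Finset.Ico (s+1) d := by
      ext x; simp [Finset.mem_erase, Finset.mem_union]; omega
    rw [hsplit, Finset.prod_union (by
      simp [Finset.disjoint_left]; omega)]
    have h1 : ∏ k ∈ range s, ((d:ℚ) - j - k) = (s.factorial : ℚ) := by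
      rw [show (fun k : ℕ => (d:ℚ) - j - k) = (fun k : ℕ => (s:ℚ) - k) from funext fun k => by rw [hcast]]
      exact prod_sub_fact s
    have h2 : ∏ k ∈ Finset.Ico (s+1) d, ((d:ℚ) - j - k) = (-1:ℚ)^(j-1) * (j-1).factorial := by
      rw [Finset.prod_Ico_eq_prod_range]
      have hcard : d - (s+1) = j - 1 := by omega
      rw [hcard]
      have : ∀ t ∈ range (j-1), ((d:ℚ) - j - (s+1+t : ℕ)) = -(1:ℚ) - t := by
        intro t ht; push_cast [hcast]; ring_nf
      rw [Finset.prod_congr rfl this, prod_neg_fact]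
    rw [h1, h2]
    -- now: (d!)⁻¹ * (s! * ((-1)^(j-1) * (j-1)!)) = (-1)^(j-1) / (d * C(d-1, j-1))
    have hch : ((d-1).choose (j-1) : ℚ) * (j-1).factorial * (d-1-(j-1)).factorial = (d-1).factorial := by
      exact_mod_cast congrArg (Nat.cast : ℕ → ℚ) (Nat.choose_mul_factorial_mul_factorial (by omega : j-1 ≤ d-1))
    have hdfac : (d.factorial : ℚ) = d * (d-1).factorial := by
      conv_lhs => rw [show d = (d-1)+1 by omega, Nat.factorial_succ]
      push_cast [show (d-1)+1 = d by omega]; ring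
    have hss : d - 1 - (j-1) = s := by omega
    rw [hss] at hch
    have hne1 : ((d-1).choose (j-1) : ℚ) ≠ 0 :=
      Nat.cast_ne_zero.mpr (Nat.choose_pos (by omega : j-1 ≤ d-1)).ne'
    have : (d.factorial:ℚ) ≠ 0 := by positivity
    field_simp
    linear_combination (d:ℚ) * hch - hdfac
  · intro i hi hne
    refine Finset.prod_eq_zero (Finset.mem_erase.mpr ⟨fun h => hne (h ▸ rfl), Finset.mem_range.mpr hsd⟩) ?_
    rw [sub_sub, sub_eq_zero]
    linear_combination hcast
  · intro h; exact absurd (Finset.mem_range.mpr hsd) h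

theorem stmt_7 (d : ℕ) (hd : 0 < d) (p : Polynomial ℚ) (hstar : ℕ → ℚ)
    (hp : p = ∑ j ∈ Finset.range (d + 1), Polynomial.C (hstar j) * binomPoly d j)
    (h0 : hstar 0 = 1) :
    p.coeff 1 =
      harmonic d +
        (1 / (d : ℚ)) *
          ∑ j ∈ Finset.Icc 1 d, (-1 : ℚ) ^ (j - 1) * hstar j / ((d - 1).choose (j - 1) : ℚ) := by
  subst hp
  rw [Polynomial.finset_sum_coeff]
  simp only [Polynomial.coeff_C_mul]
  have hsplit : Finset.range (d+1) = insert 0 (Finset.Icc 1 d) := by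
    ext x; simp; omega
  rw [hsplit, Finset.sum_insert (by simp), h0, one_mul, coeff1_binomPoly_zero]
  congr 1
  rw [Finset.mul_sum]
  refine Finset.sum_congr rfl fun j hj => ?_
  simp only [Finset.mem_Icc] at hj
  rw [coeff1_binomPoly_pos d j hd hj.1 hj.2]
  ring
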